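/- Let (W, r_1, …, r_n) be a Strip Packing instance whose rectangles are listed in the FQW-ordering with Q ≠ ∅, and consider its BL packing. Then y_{r_L} ≤ h_max + h_{r_B}. -/

import Mathlib

open scoped Classical
open MeasureTheory

/-- An axis-parallel rectangle, given by its width and its height. -/
structure Rect where
  w : ℝ
  h : ℝ

/-- A Strip Packing instance: a strip of width `W > 0` and `n` rectangles
`r 0, …, r (n-1)`, each with positive height and width at most `W`. -/
structure SPInstance (n : ℕ) where
  W : ℝ
  r : Fin n → Rect
  W_pos : 0 < W
  w_pos : ∀ i, 0 < (r i).w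
  w_le_W : ∀ i, (r i).w ≤ W
  h_pos : ∀ i, 0 < (r i).h

/-- The open box of rectangle `R` placed at position `p`. -/
def openBox (R : Rect) (p : ℝ × ℝ) : Set (ℝ × ℝ) :=
  Set.Ioo p.1 (p.1 + R.w) ×ˢ Set.Ioo p.2 (p.2 + R.h)

/-- The closed box of rectangle `R` placed at position `p`. -/
def closedBox (R : Rect) (p : ℝ × ℝ) : Set (ℝ × ℝ) :=
  Set.Icc p.1 (p.1 + R.w) ×ˢ Set.Icc p.2 (p.2 + R.h)

namespace SPInstance

variable {n : ℕ}

/-- Rectangle `i` placed at `p` lies inside the strip. -/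
def InStrip (I : SPInstance n) (i : Fin n) (p : ℝ × ℝ) : Prop :=
  0 ≤ p.1 ∧ p.1 + (I.r i).w ≤ I.W ∧ 0 ≤ p.2

/-- `pos` is a feasible packing: each rectangle lies in the strip and the open
boxes are pairwise disjoint. -/
def Feasible (I : SPInstance n) (pos : Fin n → ℝ × ℝ) : Prop :=
  (∀ i, I.InStrip i (pos i)) ∧
    Pairwise (fun i j : Fin n =>
      Disjoint (openBox (I.r i) (pos i)) (openBox (I.r j) (pos j)))

/-- The height of a packing, `max_i (y_i + h_i)`. -/
noncomputable def height (I : SPInstance n) (pos : Fin n → ℝ × ℝ) : ℝ :=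
  ⨆ i, ((pos i).2 + (I.r i).h)

/-- The minimum height of a feasible packing. -/
noncomputable def hOPT (I : SPInstance n) : ℝ :=
  sInf {H | ∃ pos, I.Feasible pos ∧ I.height pos = H}

/-- The maximum height of a rectangle of the instance. -/
noncomputable def hmax (I : SPInstance n) : ℝ :=
  ⨆ i, (I.r i).h

/-- Rectangle `i` can feasibly be placed at `p`, given the rectangles
`j < i` already placed at `pos j`. -/
def FeasibleAt (I : SPInstance n) (pos : Fin n → ℝ × ℝ) (i : Fin n) (p : ℝ × ℝ) : Prop :=
  I.InStrip i p ∧ ∀ j : Fin n, j < i →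
    Disjoint (openBox (I.r i) p) (openBox (I.r j) (pos j))

/-- `pos` is the Bottom-Left packing for the ordering `r 0, r 1, …`: every
rectangle is feasibly placed, at the lexicographically minimal `(y, x)`. -/
def IsBL (I : SPInstance n) (pos : Fin n → ℝ × ℝ) : Prop :=
  ∀ i : Fin n, I.FeasibleAt pos i (pos i) ∧
    ∀ p : ℝ × ℝ, I.FeasibleAt pos i p →
      (pos i).2 < p.2 ∨ ((pos i).2 = p.2 ∧ (pos i).1 ≤ p.1)

/-- Greedy construction of the set `F` of the FQW-partition, processing the
rectangles in the order `σ 0, σ 1, …` and adding a rectangle whenever the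
total width of `F` stays at most `W`. -/
noncomputable def greedyF (I : SPInstance n) (σ : Equiv.Perm (Fin n)) : Finset (Fin n) :=
  (List.finRange n).foldl
    (fun F k =>
      if (I.r (σ k)).w + ∑ f ∈ F, (I.r f).w ≤ I.W then insert (σ k) F else F) ∅

end SPInstance

/-- An FQW-partition datum: a processing order `σ` of the rectangles that is
sorted by decreasing height. -/
structure FQW {n : ℕ} (I : SPInstance n) where
  σ : Equiv.Perm (Fin n)
  sorted : ∀ k k' : Fin n, k ≤ k' → (I.r (σ k')).h ≤ (I.r (σ k)).h

namespace FQW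

variable {n : ℕ} {I : SPInstance n}

/-- The set `F` of the FQW-partition. -/
noncomputable def F (d : FQW I) : Finset (Fin n) := I.greedyF d.σ

/-- The set `𝒲` of the FQW-partition: rectangles not in `F` of width
greater than `W/2`. -/
noncomputable def Wset (d : FQW I) : Finset (Fin n) :=
  Finset.univ.filter fun i => i ∉ d.F ∧ I.W / 2 < (I.r i).w

/-- The set `Q` of the FQW-partition: all remaining rectangles. -/
noncomputable def Q (d : FQW I) : Finset (Fin n) :=
  Finset.univ.filter fun i => i ∉ d.F ∧ ¬ I.W / 2 < (I.r i).w

/-- The rectangles of the instance are listed in the FQW-ordering: first `F`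
sorted by decreasing height, then `Q` sorted by decreasing width, then `𝒲`. -/
def IsOrdered (d : FQW I) : Prop :=
  (∀ i : Fin n, i ∈ d.F ↔ (i : ℕ) < d.F.card) ∧
  (∀ i : Fin n, i ∈ d.Q ↔ d.F.card ≤ (i : ℕ) ∧ (i : ℕ) < d.F.card + d.Q.card) ∧
  (∀ i j : Fin n, (i : ℕ) ≤ (j : ℕ) → (j : ℕ) < d.F.card → (I.r j).h ≤ (I.r i).h) ∧
  (∀ i j : Fin n, d.F.card ≤ (i : ℕ) → (i : ℕ) ≤ (j : ℕ) →
    (j : ℕ) < d.F.card + d.Q.card → (I.r j).w ≤ (I.r i).w)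

end FQW

/-- `max {y_{r_1}, …, y_{r_i}}` (the first `i` rectangles, `0` if `i = 0`):
the lower boundary of the region `H_{i+1}` of the horizontal strip partition. -/
noncomputable def maxYBelow {n : ℕ} (pos : Fin n → ℝ × ℝ) (i : ℕ) : ℝ :=
  ⨆ j : {j : Fin n // (j : ℕ) < i}, (pos (j : Fin n)).2

namespace SPInstance

variable {n : ℕ}

/-- The horizontal line at height `t` is proper: it meets no top or
bottom face of a rectangle. -/
def ProperLine (I : SPInstance n) (pos : Fin n → ℝ × ℝ) (t : ℝ) : Prop :=
  ∀ j : Fin n, t ≠ (pos j).2 ∧ t ≠ (pos j).2 + (I.r j).h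

/-- Rectangle `j` intersects the horizontal line at height `t`. -/
def Intersects (I : SPInstance n) (pos : Fin n → ℝ × ℝ) (j : Fin n) (t : ℝ) : Prop :=
  (pos j).2 < t ∧ t < (pos j).2 + (I.r j).h

/-- The occupied part of the horizontal line at height `t`. -/
noncomputable def occupied (I : SPInstance n) (pos : Fin n → ℝ × ℝ) (t : ℝ) : Set ℝ :=
  ⋃ j ∈ {j : Fin n | I.Intersects pos j t}, Set.Icc (pos j).1 ((pos j).1 + (I.r j).w)

/-- The occupied fraction of the horizontal line at height `t`. -/
noncomputable def occFrac (I : SPInstance n) (pos : Fin n → ℝ × ℝ) (t : ℝ) : ℝ :=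
  (volume (I.occupied pos t)).toReal / I.W

/-- The region `H_{i+1}` (for the `0`-based index `i`) of the horizontal strip
partition: `[0, W] × [max {y_{r_1}, …, y_{r_i}}, y_{r_{i+1}})`. -/
def regionH (I : SPInstance n) (pos : Fin n → ℝ × ℝ) (i : Fin n) : Set (ℝ × ℝ) :=
  Set.Icc 0 I.W ×ˢ Set.Ico (maxYBelow pos (i : ℕ)) (pos i).2

/-- `G` is an unoccupied gap of the horizontal line at height `t`: a maximal
subinterval of `[0, W]` disjoint from the occupied part of the line. -/
def IsGap (I : SPInstance n) (pos : Fin n → ℝ × ℝ) (t : ℝ) (G : Set ℝ) : Prop :=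
  G.Nonempty ∧ G ⊆ Set.Icc 0 I.W ∧ G.OrdConnected ∧ Disjoint G (I.occupied pos t) ∧
    ∀ G' : Set ℝ, G'.OrdConnected → G' ⊆ Set.Icc 0 I.W →
      Disjoint G' (I.occupied pos t) → G ⊆ G' → G' = G

/-- `j` is a left supporter of `i`: it comes before `i` in the ordering, its
right face touches the left face of `i`, and their open `y`-ranges intersect. -/
def IsLeftSupporter (I : SPInstance n) (pos : Fin n → ℝ × ℝ) (i j : Fin n) : Prop :=
  j < i ∧ (pos j).1 + (I.r j).w = (pos i).1 ∧
    (pos j).2 < (pos i).2 + (I.r i).h ∧ (pos i).2 < (pos j).2 + (I.r j).h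

/-- `j` is a bottom supporter of `i`: it comes before `i` in the ordering, its
top face touches the bottom face of `i`, and their open `x`-ranges intersect. -/
def IsBottomSupporter (I : SPInstance n) (pos : Fin n → ℝ × ℝ) (i j : Fin n) : Prop :=
  j < i ∧ (pos j).2 + (I.r j).h = (pos i).2 ∧
    (pos j).1 < (pos i).1 + (I.r i).w ∧ (pos i).1 < (pos j).1 + (I.r j).w

/-- `j` is the leftmost bottom supporter of `i`. -/
def IsLeftmostBottomSupporter (I : SPInstance n) (pos : Fin n → ℝ × ℝ)
    (i j : Fin n) : Prop :=
  I.IsBottomSupporter pos i j ∧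
    ∀ j' : Fin n, I.IsBottomSupporter pos i j' → (pos j).1 ≤ (pos j').1

end SPInstance

/-- `iT` is the top rectangle `r_T` of `Q`: the rectangle of `Q` whose top face
is highest, ties broken by highest bottom face. -/
def IsTopRect {n : ℕ} (I : SPInstance n) (d : FQW I) (pos : Fin n → ℝ × ℝ)
    (iT : Fin n) : Prop :=
  iT ∈ d.Q ∧ ∀ j ∈ d.Q,
    (pos j).2 + (I.r j).h < (pos iT).2 + (I.r iT).h ∨
    ((pos j).2 + (I.r j).h = (pos iT).2 + (I.r iT).h ∧ (pos j).2 ≤ (pos iT).2)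

/-- `iL` is the left rectangle `r_L` of `Q`: the first rectangle of `Q` in the
ordering touching the left strip boundary, and `r_T` if there is none. -/
def IsLeftRect {n : ℕ} (I : SPInstance n) (d : FQW I) (pos : Fin n → ℝ × ℝ)
    (iT iL : Fin n) : Prop :=
  (iL ∈ d.Q ∧ (pos iL).1 = 0 ∧ ∀ j ∈ d.Q, (pos j).1 = 0 → iL ≤ j) ∨
  ((∀ j ∈ d.Q, (pos j).1 ≠ 0) ∧ iL = iT)

/-- The region `H' = [0, W] × ([0, h_{r_T}] ∪ [y_{r_T}, y_{r_T} + h_{r_T}])`. -/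
def Hprime {n : ℕ} (I : SPInstance n) (pos : Fin n → ℝ × ℝ) (iT : Fin n) :
    Set (ℝ × ℝ) :=
  Set.Icc 0 I.W ×ˢ
    (Set.Icc 0 (I.r iT).h ∪ Set.Icc (pos iT).2 ((pos iT).2 + (I.r iT).h))

/-- The type `T(ℓ)` of the proper horizontal line at height `t`: the rectangles
of `Q` intersecting the line whose index is smaller than the least index `j`
with `y_{r_j} > t` (equivalently, all rectangles with index at most theirs have
bottom face at height at most `t`). -/
noncomputable def TypeOf {n : ℕ} (I : SPInstance n) (d : FQW I)
    (pos : Fin n → ℝ × ℝ) (t : ℝ) : Finset (Fin n) :=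
  Finset.univ.filter fun i =>
    i ∈ d.Q ∧ I.Intersects pos i t ∧ ∀ j : Fin n, j ≤ i → (pos j).2 ≤ t

/-- `i` is `LM(ℓ)`: the rectangle of `T(ℓ)` with smallest `x`-coordinate. -/
def IsLM {n : ℕ} (I : SPInstance n) (d : FQW I) (pos : Fin n → ℝ × ℝ) (t : ℝ)
    (i : Fin n) : Prop :=
  i ∈ TypeOf I d pos t ∧ ∀ j ∈ TypeOf I d pos t, (pos i).1 ≤ (pos j).1

/-- The horizontal line at height `t` lies in `H_{a+2} ∪ ⋯ ∪ H_L`, where `iL`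
is the `0`-based index of `r_L` (so `L = iL + 1`, `1`-based). -/
def LineInHUnion {n : ℕ} (I : SPInstance n) (d : FQW I) (pos : Fin n → ℝ × ℝ)
    (iL : Fin n) (t : ℝ) : Prop :=
  ∃ m : Fin n, d.F.card + 1 ≤ (m : ℕ) ∧ m ≤ iL ∧
    maxYBelow pos (m : ℕ) ≤ t ∧ t < (pos m).2

/-- The space `H_{a+2} ∪ ⋯ ∪ H_L`, where `iL` is the `0`-based index of `r_L`. -/
def regionHUnion {n : ℕ} (I : SPInstance n) (d : FQW I) (pos : Fin n → ℝ × ℝ)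
    (iL : Fin n) : Set (ℝ × ℝ) :=
  ⋃ m ∈ {m : Fin n | d.F.card + 1 ≤ (m : ℕ) ∧ m ≤ iL}, I.regionH pos m

/-- The horizontal line at height `t` belongs to `L^k`: it is a proper line of
order `k` lying in `H_{a+2} ∪ ⋯ ∪ H_L`. -/
def InLk {n : ℕ} (I : SPInstance n) (d : FQW I) (pos : Fin n → ℝ × ℝ)
    (iL : Fin n) (k : ℕ) (t : ℝ) : Prop :=
  I.ProperLine pos t ∧ LineInHUnion I d pos iL t ∧ (TypeOf I d pos t).card = k

/-- `i` belongs to `R^k`: it is `LM(ℓ)` for some line `ℓ ∈ L^k`. -/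
def InRk {n : ℕ} (I : SPInstance n) (d : FQW I) (pos : Fin n → ℝ × ℝ)
    (iL : Fin n) (k : ℕ) (i : Fin n) : Prop :=
  ∃ t : ℝ, InLk I d pos iL k t ∧ IsLM I d pos t i

/-- `i` is `LM^k`: the rectangle of `R^k` with smallest `x`-coordinate,
ties broken by largest `y`-coordinate. -/
def IsLMk {n : ℕ} (I : SPInstance n) (d : FQW I) (pos : Fin n → ℝ × ℝ)
    (iL : Fin n) (k : ℕ) (i : Fin n) : Prop :=
  InRk I d pos iL k i ∧ ∀ j : Fin n, InRk I d pos iL k j →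
    (pos i).1 < (pos j).1 ∨ ((pos i).1 = (pos j).1 ∧ (pos j).2 ≤ (pos i).2)

/-- `v = x_F^ℓ` for the line `ℓ` at height `t`: the right face `x + w` of the
rightmost rectangle of `F` intersecting `ℓ`, and `0` if there is none. -/
def IsXF {n : ℕ} (I : SPInstance n) (d : FQW I) (pos : Fin n → ℝ × ℝ)
    (t v : ℝ) : Prop :=
  ((∃ f ∈ d.F, I.Intersects pos f t ∧ v = (pos f).1 + (I.r f).w) ∧
    ∀ f ∈ d.F, I.Intersects pos f t → (pos f).1 + (I.r f).w ≤ v) ∨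
  ((∀ f ∈ d.F, ¬ I.Intersects pos f t) ∧ v = 0)


namespace BLProofAux

open SPInstance

variable {n : ℕ}

lemma mem_openBox {R : Rect} {p z : ℝ × ℝ} :
    z ∈ openBox R p ↔ (p.1 < z.1 ∧ z.1 < p.1 + R.w) ∧ (p.2 < z.2 ∧ z.2 < p.2 + R.h) := by
  simp [openBox, Set.mem_prod]

lemma disjoint_openBox_iff {R S : Rect} {p q : ℝ × ℝ}
    (hRw : 0 < R.w) (hRh : 0 < R.h) (hSw : 0 < S.w) (hSh : 0 < S.h) :
    Disjoint (openBox R p) (openBox S q) ↔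
      p.1 + R.w ≤ q.1 ∨ q.1 + S.w ≤ p.1 ∨ p.2 + R.h ≤ q.2 ∨ q.2 + S.h ≤ p.2 := by
  rw [openBox, openBox, Set.disjoint_iff_inter_eq_empty, Set.prod_inter_prod,
    Set.prod_eq_empty_iff, Set.Ioo_inter_Ioo, Set.Ioo_inter_Ioo,
    Set.Ioo_eq_empty_iff, Set.Ioo_eq_empty_iff, not_lt, not_lt,
    min_le_iff, min_le_iff, le_max_iff, le_max_iff, le_max_iff, le_max_iff]
  constructor
  · rintro (((h | h) | (h | h)) | ((h | h) | (h | h)))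
    · exfalso; linarith
    · exact Or.inl h
    · exact Or.inr (Or.inl h)
    · exfalso; linarith
    · exfalso; linarith
    · exact Or.inr (Or.inr (Or.inl h))
    · exact Or.inr (Or.inr (Or.inr h))
    · exfalso; linarith
  · rintro (h | h | h | h)
    · exact Or.inl (Or.inl (Or.inr h))
    · exact Or.inl (Or.inr (Or.inl h))
    · exact Or.inr (Or.inl (Or.inr h))
    · exact Or.inr (Or.inr (Or.inl h))

lemma h_le_hmax (I : SPInstance n) (i : Fin n) : (I.r i).h ≤ I.hmax :=
  le_ciSup (f := fun i => (I.r i).h) (Set.Finite.bddAbove (Set.finite_range _)) i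

end BLProofAux

namespace BLProofAux

open SPInstance

variable {n : ℕ}

/-- Partial greedy construction after `k` steps. -/
noncomputable def gFk (I : SPInstance n) (σ : Equiv.Perm (Fin n)) : ℕ → Finset (Fin n)
  | 0 => ∅
  | k+1 =>
    if h : k < n then
      (if (I.r (σ ⟨k, h⟩)).w + ∑ f ∈ gFk I σ k, (I.r f).w ≤ I.W then
        insert (σ ⟨k, h⟩) (gFk I σ k) else gFk I σ k)
    else gFk I σ k

lemma gFk_take (I : SPInstance n) (σ : Equiv.Perm (Fin n)) :
    ∀ k : ℕ, ((List.finRange n).take k).foldl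
      (fun F j => if (I.r (σ j)).w + ∑ f ∈ F, (I.r f).w ≤ I.W then insert (σ j) F else F) ∅
      = gFk I σ k := by
  intro k
  induction k with
  | zero => simp [gFk]
  | succ k ih =>
    rw [List.take_succ, List.foldl_append, ih]
    by_cases h : k < n
    · have hlen : k < (List.finRange n).length := by simpa using h
      rw [List.getElem?_eq_getElem hlen, List.getElem_finRange]
      simp [gFk, h]
    · rw [List.getElem?_eq_none (by simpa using not_lt.mp h)]
      simp [gFk, h]

lemma greedyF_eq (I : SPInstance n) (σ : Equiv.Perm (Fin n)) :
    I.greedyF σ = gFk I σ n := by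
  rw [SPInstance.greedyF, ← gFk_take I σ n]
  congr 1
  conv_lhs => rw [← List.take_length (l := List.finRange n)]
  rw [List.length_finRange]

lemma gFk_symm_lt (I : SPInstance n) (σ : Equiv.Perm (Fin n)) :
    ∀ k : ℕ, ∀ f ∈ gFk I σ k, ((σ.symm f : Fin n) : ℕ) < k := by
  intro k
  induction k with
  | zero => simp [gFk]
  | succ k ih =>
    intro f hf
    rw [gFk] at hf
    by_cases h : k < n
    · rw [dif_pos h] at hf
      by_cases hc : (I.r (σ ⟨k, h⟩)).w + ∑ f ∈ gFk I σ k, (I.r f).w ≤ I.W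
      · rw [if_pos hc] at hf
        rcases Finset.mem_insert.mp hf with rfl | hf
        · simp
        · exact Nat.lt_succ_of_lt (ih f hf)
      · rw [if_neg hc] at hf
        exact Nat.lt_succ_of_lt (ih f hf)
    · rw [dif_neg h] at hf
      exact Nat.lt_succ_of_lt (ih f hf)

lemma gFk_sum_le (I : SPInstance n) (σ : Equiv.Perm (Fin n)) :
    ∀ k : ℕ, ∑ f ∈ gFk I σ k, (I.r f).w ≤ I.W := by
  intro k
  induction k with
  | zero => simp [gFk]; exact le_of_lt I.W_pos
  | succ k ih =>
    rw [gFk]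
    by_cases h : k < n
    · rw [dif_pos h]
      by_cases hc : (I.r (σ ⟨k, h⟩)).w + ∑ f ∈ gFk I σ k, (I.r f).w ≤ I.W
      · rw [if_pos hc]
        have hnm : σ ⟨k, h⟩ ∉ gFk I σ k := by
          intro hmem
          have := gFk_symm_lt I σ k _ hmem
          simp at this
        rw [Finset.sum_insert hnm]
        exact hc
      · rw [if_neg hc]; exact ih
    · rw [dif_neg h]; exact ih

lemma gFk_mono (I : SPInstance n) (σ : Equiv.Perm (Fin n)) :
    ∀ {k m : ℕ}, k ≤ m → gFk I σ k ⊆ gFk I σ m := by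
  intro k m hkm
  induction m with
  | zero => have : k = 0 := Nat.le_zero.mp hkm; subst this; exact subset_rfl
  | succ m ih =>
    rcases Nat.lt_or_ge k (m+1) with h | h
    · have hsub : gFk I σ m ⊆ gFk I σ (m+1) := by
        rw [gFk]
        by_cases hn : m < n
        · rw [dif_pos hn]
          by_cases hc : (I.r (σ ⟨m, hn⟩)).w + ∑ f ∈ gFk I σ m, (I.r f).w ≤ I.W
          · rw [if_pos hc]; exact Finset.subset_insert _ _
          · rw [if_neg hc]
        · rw [dif_neg hn]
      exact (ih (Nat.lt_succ_iff.mp h)).trans hsub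
    · have : k = m + 1 := le_antisymm hkm h
      subst this; exact subset_rfl

lemma gFk_mem_of_mem (I : SPInstance n) (σ : Equiv.Perm (Fin n)) (j : Fin n) :
    ∀ m : ℕ, σ j ∈ gFk I σ m → σ j ∈ gFk I σ ((j : ℕ) + 1) := by
  intro m
  induction m with
  | zero => simp [gFk]
  | succ m ih =>
    intro hmem
    rcases Nat.lt_or_ge (j : ℕ) m with h | h
    · -- j + 1 ≤ m
      rw [gFk] at hmem
      by_cases hn : m < n
      · rw [dif_pos hn] at hmem
        by_cases hc : (I.r (σ ⟨m, hn⟩)).w + ∑ f ∈ gFk I σ m, (I.r f).w ≤ I.W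
        · rw [if_pos hc] at hmem
          rcases Finset.mem_insert.mp hmem with heq | hmem
          · have : j = ⟨m, hn⟩ := σ.injective heq
            rw [this] at h; simp at h
          · exact ih hmem
        · rw [if_neg hc] at hmem; exact ih hmem
      · rw [dif_neg hn] at hmem; exact ih hmem
    · rcases Nat.lt_or_ge (j:ℕ) (m+1) with h2 | h2
      · have : (j:ℕ) = m := by omega
        subst this
        exact hmem
      · -- impossible: gFk_symm_lt
        have := gFk_symm_lt I σ (m+1) _ hmem
        simp at this
        omega

lemma gFk_eq_filter (I : SPInstance n) (σ : Equiv.Perm (Fin n)) (k : ℕ) (hk : k ≤ n) :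
    gFk I σ k = (gFk I σ n).filter (fun f => ((σ.symm f : Fin n) : ℕ) < k) := by
  ext f
  simp only [Finset.mem_filter]
  constructor
  · intro hf
    exact ⟨gFk_mono I σ hk hf, gFk_symm_lt I σ k f hf⟩
  · rintro ⟨hf, hlt⟩
    have hf' : σ (σ.symm f) ∈ gFk I σ n := by rwa [Equiv.apply_symm_apply]
    have := gFk_mem_of_mem I σ (σ.symm f) n hf'
    rw [Equiv.apply_symm_apply] at this
    exact gFk_mono I σ (by omega) this

lemma gFk_reject (I : SPInstance n) (σ : Equiv.Perm (Fin n)) (q : Fin n)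
    (hq : q ∉ gFk I σ n) :
    I.W < (I.r q).w + ∑ f ∈ gFk I σ ((σ.symm q : Fin n) : ℕ), (I.r f).w := by
  by_contra hcon
  push_neg at hcon
  apply hq
  set k : ℕ := ((σ.symm q : Fin n) : ℕ) with hkdef
  have hkn : k < n := (σ.symm q).isLt
  have hσk : σ ⟨k, hkn⟩ = q := by
    have : (⟨k, hkn⟩ : Fin n) = σ.symm q := by simp [hkdef]
    rw [this, Equiv.apply_symm_apply]
  have : q ∈ gFk I σ (k+1) := by
    rw [gFk, dif_pos hkn, hσk, if_pos hcon]
    exact Finset.mem_insert_self _ _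
  exact gFk_mono I σ (by omega) this

end BLProofAux

namespace BLProofAux

open SPInstance

variable {n : ℕ}

/-- Cumulative width of the first `k` rectangles. -/
noncomputable def Xc (I : SPInstance n) (k : ℕ) : ℝ :=
  ∑ j ∈ Finset.univ.filter (fun j : Fin n => (j : ℕ) < k), (I.r j).w

lemma filter_lt_succ (k : ℕ) (hk : k < n) :
    Finset.univ.filter (fun j : Fin n => (j : ℕ) < k + 1)
      = insert ⟨k, hk⟩ (Finset.univ.filter (fun j : Fin n => (j : ℕ) < k)) := by
  ext j
  simp only [Finset.mem_filter, Finset.mem_univ, true_and, Finset.mem_insert]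
  constructor
  · intro h
    rcases Nat.lt_or_ge (j : ℕ) k with h2 | h2
    · exact Or.inr h2
    · left; apply Fin.ext; simp; omega
  · rintro (rfl | h)
    · simp
    · omega

lemma Xc_succ (I : SPInstance n) (k : ℕ) (hk : k < n) :
    Xc I (k + 1) = Xc I k + (I.r ⟨k, hk⟩).w := by
  rw [Xc, Xc, filter_lt_succ k hk, Finset.sum_insert (by simp)]
  ring

lemma Xc_nonneg (I : SPInstance n) (k : ℕ) : 0 ≤ Xc I k :=
  Finset.sum_nonneg fun j _ => le_of_lt (I.w_pos j)

lemma Xc_mono (I : SPInstance n) {k m : ℕ} (h : k ≤ m) : Xc I k ≤ Xc I m := by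
  apply Finset.sum_le_sum_of_subset_of_nonneg
  · intro j hj; simp at hj ⊢; omega
  · exact fun j _ _ => le_of_lt (I.w_pos j)

lemma card_val_lt (m : ℕ) (hm : m ≤ n) :
    (Finset.univ.filter (fun j : Fin n => (j : ℕ) < m)).card = m := by
  induction m with
  | zero => simp
  | succ m ih =>
    have hmn : m < n := by omega
    rw [filter_lt_succ m hmn, Finset.card_insert_of_notMem (by simp), ih (by omega)]

lemma dc_char (S : Finset (Fin n))
    (hdc : ∀ i j : Fin n, (i : ℕ) ≤ (j : ℕ) → j ∈ S → i ∈ S) (i : Fin n) :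
    i ∈ S ↔ (i : ℕ) < S.card := by
  constructor
  · intro hi
    have hsub : Finset.univ.filter (fun j : Fin n => (j : ℕ) < (i : ℕ) + 1) ⊆ S := by
      intro j hj
      simp only [Finset.mem_filter, Finset.mem_univ, true_and] at hj
      exact hdc j i (by omega) hi
    have := Finset.card_le_card hsub
    rwa [card_val_lt _ i.isLt] at this
  · intro hi
    by_contra hni
    have hsub : S ⊆ Finset.univ.filter (fun j : Fin n => (j : ℕ) < (i : ℕ)) := by
      intro j hj
      simp only [Finset.mem_filter, Finset.mem_univ, true_and]
      by_contra h
      exact hni (hdc i j (by omega) hj)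
    have := Finset.card_le_card hsub
    rw [card_val_lt _ (le_of_lt i.isLt)] at this
    omega

lemma cover (I : SPInstance n) (K : ℕ) (hK : K ≤ n) :
    ∀ z : ℝ, 0 ≤ z → z < Xc I K →
      ∃ j : Fin n, (j : ℕ) < K ∧ Xc I (j : ℕ) ≤ z ∧ z < Xc I (j : ℕ) + (I.r j).w := by
  induction K with
  | zero => intro z hz0 hz; rw [Xc] at hz; simp at hz; linarith
  | succ K ih =>
    intro z hz0 hz
    have hKn : K < n := by omega
    rcases lt_or_ge z (Xc I K) with h | h
    · obtain ⟨j, h1, h2, h3⟩ := ih (by omega) z hz0 h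
      exact ⟨j, by omega, h2, h3⟩
    · refine ⟨⟨K, hKn⟩, by simp, by simpa using h, ?_⟩
      rw [Xc_succ I K hKn] at hz
      simpa using hz

section Stair

variable {I : SPInstance n} {d : FQW I} {pos : Fin n → ℝ × ℝ}

/-- All rectangles of `F` are placed contiguously on the floor of the strip. -/
lemma stair (hord : d.IsOrdered) (hBL : I.IsBL pos) :
    ∀ k : Fin n, (k : ℕ) < d.F.card → pos k = (Xc I (k : ℕ), 0) := by
  have hFsum : ∑ f ∈ d.F, (I.r f).w ≤ I.W := by
    show ∑ f ∈ I.greedyF d.σ, (I.r f).w ≤ I.W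
    rw [greedyF_eq I d.σ]; exact gFk_sum_le I d.σ n
  suffices H : ∀ m : ℕ, ∀ k : Fin n, (k : ℕ) < m → (k : ℕ) < d.F.card →
      pos k = (Xc I (k : ℕ), 0) by
    intro k hk; exact H ((k : ℕ) + 1) k (by omega) hk
  intro m
  induction m with
  | zero => omega
  | succ m ih =>
    intro k hkm hk
    have hkn : (k : ℕ) < n := k.isLt
    have ihk : ∀ j : Fin n, j < k → pos j = (Xc I (j : ℕ), 0) := by
      intro j hj
      have hjk : (j : ℕ) < (k : ℕ) := Fin.lt_def.mp hj
      exact ih j (by omega) (by omega)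
    -- the target position is feasible
    have hXw : Xc I (k : ℕ) + (I.r k).w ≤ I.W := by
      have h1 : Xc I ((k : ℕ) + 1) ≤ ∑ f ∈ d.F, (I.r f).w := by
        apply Finset.sum_le_sum_of_subset_of_nonneg
        · intro j hj
          simp only [Finset.mem_filter, Finset.mem_univ, true_and] at hj
          exact (hord.1 j).mpr (by omega)
        · exact fun j _ _ => le_of_lt (I.w_pos j)
      rw [Xc_succ I (k : ℕ) hkn, Fin.eta] at h1
      linarith
    have hfeas : I.FeasibleAt pos k (Xc I (k : ℕ), 0) := by
      refine ⟨⟨Xc_nonneg I _, hXw, le_refl 0⟩, ?_⟩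
      intro j hj
      rw [disjoint_openBox_iff (I.w_pos k) (I.h_pos k) (I.w_pos j) (I.h_pos j)]
      have hjk : (j : ℕ) < (k : ℕ) := Fin.lt_def.mp hj
      rw [ihk j hj]
      right; left
      show Xc I (j : ℕ) + (I.r j).w ≤ Xc I (k : ℕ)
      have h2 : Xc I ((j : ℕ) + 1) ≤ Xc I (k : ℕ) := Xc_mono I (by omega)
      rw [Xc_succ I (j : ℕ) j.isLt, Fin.eta] at h2
      exact h2
    have hstrip := (hBL k).1.1
    have hy0 : 0 ≤ (pos k).2 := hstrip.2.2
    have hlex := (hBL k).2 _ hfeas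
    have hy : (pos k).2 = 0 ∧ (pos k).1 ≤ Xc I (k : ℕ) := by
      rcases hlex with h | h
      · exfalso; have h' : (pos k).2 < 0 := h; linarith
      · exact ⟨h.1, h.2⟩
    have hxge : Xc I (k : ℕ) ≤ (pos k).1 := by
      by_contra hlt
      push_neg at hlt
      have hx0 : 0 ≤ (pos k).1 := hstrip.1
      set x := (pos k).1 with hxdef
      set z := (x + min (x + (I.r k).w) (Xc I (k : ℕ))) / 2 with hzdef
      have hwk := I.w_pos k
      have hz1 : x < z := by
        have : x < min (x + (I.r k).w) (Xc I (k : ℕ)) := lt_min (by linarith) hlt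
        rw [hzdef]; linarith
      have hz2 : z < x + (I.r k).w := by
        have := min_le_left (x + (I.r k).w) (Xc I (k : ℕ)); rw [hzdef]; linarith
      have hz3 : z < Xc I (k : ℕ) := by
        have := min_le_right (x + (I.r k).w) (Xc I (k : ℕ)); rw [hzdef]; linarith
      obtain ⟨j, hjK, hjz1, hjz2⟩ := cover I (k : ℕ) (le_of_lt hkn) z (by linarith) hz3
      have hjlt : (⟨(j:ℕ), j.isLt⟩ : Fin n) < k := by rw [Fin.lt_def]; simpa using hjK
      have hjpos := ihk j (by rw [Fin.lt_def]; exact hjK)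
      have hdisj := (hBL k).1.2 j (by rw [Fin.lt_def]; exact hjK)
      set x' := (z + min (x + (I.r k).w) (Xc I (j : ℕ) + (I.r j).w)) / 2 with hx'def
      set y' := min (I.r k).h (I.r j).h / 2 with hy'def
      have hx'1 : z < x' := by
        have : z < min (x + (I.r k).w) (Xc I (j : ℕ) + (I.r j).w) := lt_min hz2 hjz2
        rw [hx'def]; linarith
      have hx'2 : x' < x + (I.r k).w := by
        have := min_le_left (x + (I.r k).w) (Xc I (j : ℕ) + (I.r j).w)
        rw [hx'def]; linarith
      have hx'3 : x' < Xc I (j : ℕ) + (I.r j).w := by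
        have := min_le_right (x + (I.r k).w) (Xc I (j : ℕ) + (I.r j).w)
        rw [hx'def]; linarith
      have hy'1 : 0 < y' := by
        have := lt_min (I.h_pos k) (I.h_pos j)
        rw [hy'def]; linarith
      have hy'2 : y' < (I.r k).h := by
        have h1 := min_le_left (I.r k).h (I.r j).h
        have h2 := lt_min (I.h_pos k) (I.h_pos j)
        rw [hy'def]; linarith
      have hy'3 : y' < (I.r j).h := by
        have h1 := min_le_right (I.r k).h (I.r j).h
        have h2 := lt_min (I.h_pos k) (I.h_pos j)
        rw [hy'def]; linarith
      have hmem1 : ((x', y') : ℝ × ℝ) ∈ openBox (I.r k) (pos k) := by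
        rw [mem_openBox]
        refine ⟨⟨?_, ?_⟩, ?_, ?_⟩
        · show (pos k).1 < x'; rw [← hxdef]; linarith
        · show x' < (pos k).1 + (I.r k).w; rw [← hxdef]; linarith
        · rw [hy.1]; exact hy'1
        · rw [hy.1]; linarith
      have hmem2 : ((x', y') : ℝ × ℝ) ∈ openBox (I.r j) (pos j) := by
        rw [mem_openBox, hjpos]
        refine ⟨⟨?_, ?_⟩, ?_, ?_⟩
        · show Xc I (j : ℕ) < x'; linarith
        · show x' < Xc I (j : ℕ) + (I.r j).w; exact hx'3
        · exact hy'1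
        · show y' < 0 + (I.r j).h; linarith
      exact Set.disjoint_left.mp hdisj hmem1 hmem2
    have : (pos k).1 = Xc I (k : ℕ) := le_antisymm hy.2 hxge
    exact Prod.ext_iff.mpr ⟨this, hy.1⟩

end Stair

end BLProofAux

namespace BLProofAux

open SPInstance

variable {n : ℕ} {I : SPInstance n} {pos : Fin n → ℝ × ℝ}

/-- In a BL packing, a rectangle not touching the left boundary has a left supporter. -/
lemma exists_left_supporter (hBL : I.IsBL pos) (i : Fin n) (hx : 0 < (pos i).1) :
    ∃ j, j < i ∧ (pos j).1 + (I.r j).w = (pos i).1 ∧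
      (pos j).2 < (pos i).2 + (I.r i).h ∧ (pos i).2 < (pos j).2 + (I.r j).h := by
  by_contra hno
  push_neg at hno
  classical
  set S := Finset.univ.filter (fun j : Fin n => j < i ∧
    (pos j).2 < (pos i).2 + (I.r i).h ∧ (pos i).2 < (pos j).2 + (I.r j).h ∧
    (pos j).1 + (I.r j).w < (pos i).1) with hS
  set E := insert (pos i).1 (S.image fun j => (pos i).1 - (pos j).1 - (I.r j).w) with hE
  have hEne : E.Nonempty := ⟨_, Finset.mem_insert_self _ _⟩
  set δ := E.min' hEne with hδ
  have hδ_le : δ ≤ (pos i).1 := Finset.min'_le _ _ (Finset.mem_insert_self _ _)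
  have hδpos : 0 < δ := by
    have hmem := E.min'_mem hEne
    rcases Finset.mem_insert.mp hmem with h | h
    · rw [hδ, h]; exact hx
    · obtain ⟨j, hjS, hjeq⟩ := Finset.mem_image.mp h
      rw [hS] at hjS
      simp only [Finset.mem_filter, Finset.mem_univ, true_and] at hjS
      rw [hδ, ← hjeq]
      linarith [hjS.2.2.2]
  have hδS : ∀ j ∈ S, (pos j).1 + (I.r j).w ≤ (pos i).1 - δ := by
    intro j hj
    have : δ ≤ (pos i).1 - (pos j).1 - (I.r j).w :=
      Finset.min'_le _ _ (Finset.mem_insert_of_mem (Finset.mem_image_of_mem _ hj))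
    linarith
  have hstrip := (hBL i).1.1
  have hfeas : I.FeasibleAt pos i ((pos i).1 - δ, (pos i).2) := by
    refine ⟨⟨by simp; linarith, ?_, hstrip.2.2⟩, ?_⟩
    · show (pos i).1 - δ + (I.r i).w ≤ I.W
      have := hstrip.2.1
      linarith
    intro j hj
    rw [disjoint_openBox_iff (I.w_pos i) (I.h_pos i) (I.w_pos j) (I.h_pos j)]
    by_cases hyo : (pos j).2 < (pos i).2 + (I.r i).h ∧ (pos i).2 < (pos j).2 + (I.r j).h
    · have hd := (hBL i).1.2 j hj
      rw [disjoint_openBox_iff (I.w_pos i) (I.h_pos i) (I.w_pos j) (I.h_pos j)] at hd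
      rcases hd with h | h | h | h
      · left; show (pos i).1 - δ + (I.r i).w ≤ (pos j).1; linarith
      · have hne : (pos j).1 + (I.r j).w ≠ (pos i).1 := by
          intro heq
          have := hno j hj heq hyo.1
          linarith [hyo.2]
        have hlt : (pos j).1 + (I.r j).w < (pos i).1 := lt_of_le_of_ne h hne
        have hjS : j ∈ S := by
          rw [hS]
          simp only [Finset.mem_filter, Finset.mem_univ, true_and]
          exact ⟨hj, hyo.1, hyo.2, hlt⟩
        right; left
        show (pos j).1 + (I.r j).w ≤ (pos i).1 - δ
        exact hδS j hjS
      · exact Or.inr (Or.inr (Or.inl h))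
      · exact Or.inr (Or.inr (Or.inr h))
    · rcases not_and_or.mp hyo with h | h
      · exact Or.inr (Or.inr (Or.inl (not_lt.mp h)))
      · exact Or.inr (Or.inr (Or.inr (not_lt.mp h)))
  rcases (hBL i).2 _ hfeas with h | h
  · simp at h
  · have h2 : (pos i).1 ≤ (pos i).1 - δ := h.2
    linarith

variable {d : FQW I}

/-- Key claim: every rectangle of `Q` has height at most `h_{r_B}`. -/
lemma Q_h_le_hB (hord : d.IsOrdered) (hBL : I.IsBL pos) (hQ : d.Q.Nonempty)
    (ia : Fin n) (hia : (ia : ℕ) = d.F.card)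
    (iB : Fin n) (hiB : I.IsLeftmostBottomSupporter pos ia iB)
    (q : Fin n) (hq : q ∈ d.Q) : (I.r q).h ≤ (I.r iB).h := by
  by_contra hcon
  push_neg at hcon
  have hiBlt : iB < ia := hiB.1.1
  have hiBF : (iB : ℕ) < d.F.card := by rw [← hia]; exact Fin.lt_def.mp hiBlt
  have hstairB := stair hord hBL iB hiBF
  have hyia : (pos ia).2 = (I.r iB).h := by
    have h1 := hiB.1.2.1
    rw [hstairB] at h1
    have h2 : (0:ℝ) + (I.r iB).h = (pos ia).2 := h1
    linarith
  -- the set of F-rectangles strictly taller than iB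
  set T := Finset.univ.filter
    (fun f : Fin n => (f : ℕ) < d.F.card ∧ (I.r iB).h < (I.r f).h) with hT
  have hdc : ∀ i j : Fin n, (i : ℕ) ≤ (j : ℕ) → j ∈ T → i ∈ T := by
    intro i j hij hj
    rw [hT] at hj ⊢
    simp only [Finset.mem_filter, Finset.mem_univ, true_and] at hj ⊢
    exact ⟨by omega, lt_of_lt_of_le hj.2 (hord.2.2.1 i j hij hj.1)⟩
  have hchar := dc_char T hdc
  set c := T.card with hc
  have hTc : T = Finset.univ.filter (fun j : Fin n => (j : ℕ) < c) := by
    ext j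
    rw [hchar j]
    simp
  have hXc : ∑ f ∈ T, (I.r f).w = Xc I c := by rw [hTc]; rfl
  -- greedy rejection of q
  have hqF : q ∉ d.F := by
    have := (Finset.mem_filter.mp hq).2
    exact this.1
  have hFg : d.F = gFk I d.σ n := greedyF_eq I d.σ
  have hrej := gFk_reject I d.σ q (by rw [← hFg]; exact hqF)
  have hsub : gFk I d.σ ((d.σ.symm q : Fin n) : ℕ) ⊆ T := by
    intro f hf
    have hfF : f ∈ d.F := by
      rw [hFg]
      exact gFk_mono I d.σ (le_of_lt (d.σ.symm q).isLt) hf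
    have hlt := gFk_symm_lt I d.σ _ f hf
    have hh : (I.r q).h ≤ (I.r f).h := by
      have := d.sorted (d.σ.symm f) (d.σ.symm q) (by rw [Fin.le_def]; omega)
      simpa using this
    rw [hT]
    simp only [Finset.mem_filter, Finset.mem_univ, true_and]
    exact ⟨(hord.1 f).mp hfF, lt_of_lt_of_le hcon hh⟩
  have hsum : ∑ f ∈ gFk I d.σ ((d.σ.symm q : Fin n) : ℕ), (I.r f).w ≤ ∑ f ∈ T, (I.r f).w :=
    Finset.sum_le_sum_of_subset_of_nonneg hsub (fun j _ _ => le_of_lt (I.w_pos j))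
  have hXcW : I.W - (I.r q).w < Xc I c := by rw [← hXc]; linarith
  -- widths
  have hbQ : 0 < d.Q.card := Finset.card_pos.mpr hQ
  have hiaQ : ia ∈ d.Q := (hord.2.1 ia).mpr ⟨by omega, by omega⟩
  have hqidx := (hord.2.1 q).mp hq
  have hwq : (I.r q).w ≤ (I.r ia).w := hord.2.2.2 ia q (by omega) (by omega) hqidx.2
  have hstrip_ia := (hBL ia).1.1
  have hxia : (pos ia).1 + (I.r ia).w ≤ I.W := hstrip_ia.2.1
  have hxia0 : 0 ≤ (pos ia).1 := hstrip_ia.1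
  have hiaXc : (pos ia).1 < Xc I c := by linarith
  set z := ((pos ia).1 + min (Xc I c) ((pos ia).1 + (I.r ia).w)) / 2 with hz
  have hwia := I.w_pos ia
  have hz1 : (pos ia).1 < z := by
    have := lt_min hiaXc (by linarith : (pos ia).1 < (pos ia).1 + (I.r ia).w)
    rw [hz]; linarith
  have hz2 : z < Xc I c := by
    have := min_le_left (Xc I c) ((pos ia).1 + (I.r ia).w)
    rw [hz]; linarith
  have hz3 : z < (pos ia).1 + (I.r ia).w := by
    have := min_le_right (Xc I c) ((pos ia).1 + (I.r ia).w)
    rw [hz]; linarith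
  have hcn : c ≤ n := by
    have := Finset.card_le_univ T
    simpa using this
  obtain ⟨j, hjc, hjz1, hjz2⟩ := cover I c hcn z (by linarith) hz2
  have hjT : j ∈ T := (hchar j).mpr hjc
  rw [hT] at hjT
  simp only [Finset.mem_filter, Finset.mem_univ, true_and] at hjT
  have hstairj := stair hord hBL j hjT.1
  have hjia : j < ia := by rw [Fin.lt_def]; omega
  have hdisj := (hBL ia).1.2 j hjia
  set x' := (z + min ((pos ia).1 + (I.r ia).w) (Xc I (j : ℕ) + (I.r j).w)) / 2 with hx'
  set y' := ((I.r iB).h + min ((I.r j).h) ((I.r iB).h + (I.r ia).h)) / 2 with hy'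
  have hhia := I.h_pos ia
  have hhiB := I.h_pos iB
  have hx'1 : z < x' := by
    have := lt_min hz3 hjz2
    rw [hx']; linarith
  have hx'2 : x' < (pos ia).1 + (I.r ia).w := by
    have := min_le_left ((pos ia).1 + (I.r ia).w) (Xc I (j : ℕ) + (I.r j).w)
    rw [hx']; linarith
  have hx'3 : x' < Xc I (j : ℕ) + (I.r j).w := by
    have := min_le_right ((pos ia).1 + (I.r ia).w) (Xc I (j : ℕ) + (I.r j).w)
    rw [hx']; linarith
  have hy'1 : (I.r iB).h < y' := by
    have := lt_min hjT.2 (by linarith : (I.r iB).h < (I.r iB).h + (I.r ia).h)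
    rw [hy']; linarith
  have hy'2 : y' < (I.r j).h := by
    have := min_le_left ((I.r j).h) ((I.r iB).h + (I.r ia).h)
    rw [hy']; linarith
  have hy'3 : y' < (I.r iB).h + (I.r ia).h := by
    have := min_le_right ((I.r j).h) ((I.r iB).h + (I.r ia).h)
    rw [hy']; linarith
  have hmem1 : ((x', y') : ℝ × ℝ) ∈ openBox (I.r ia) (pos ia) := by
    rw [mem_openBox]
    refine ⟨⟨by linarith, by linarith⟩, ?_, ?_⟩
    · rw [hyia]; exact hy'1
    · rw [hyia]; linarith
  have hmem2 : ((x', y') : ℝ × ℝ) ∈ openBox (I.r j) (pos j) := by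
    rw [mem_openBox, hstairj]
    refine ⟨⟨?_, ?_⟩, ?_, ?_⟩
    · show Xc I (j : ℕ) < x'; linarith
    · show x' < Xc I (j : ℕ) + (I.r j).w; exact hx'3
    · show (0:ℝ) < y'; linarith
    · show y' < 0 + (I.r j).h; linarith
  exact Set.disjoint_left.mp hdisj hmem1 hmem2

end BLProofAux

/-- **Lemma.** In the BL packing of an FQW-ordered instance with `Q ≠ ∅`, the
left rectangle `r_L` is placed at height `y_{r_L} ≤ h_max + h_{r_B}`. -/
theorem left_rect_height_bound {n : ℕ} (I : SPInstance n) (d : FQW I)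
    (hord : d.IsOrdered) (pos : Fin n → ℝ × ℝ) (hBL : I.IsBL pos)
    (hQ : d.Q.Nonempty) (ia : Fin n) (hia : (ia : ℕ) = d.F.card)
    (iB : Fin n) (hiB : I.IsLeftmostBottomSupporter pos ia iB)
    (iT iL : Fin n) (hiT : IsTopRect I d pos iT)
    (hiL : IsLeftRect I d pos iT iL) :
    (pos iL).2 ≤ I.hmax + (I.r iB).h := by
  classical
  open BLProofAux in
  have hiLQ : iL ∈ d.Q := by
    rcases hiL with ⟨h, _, _⟩ | ⟨_, rfl⟩
    · exact h
    · exact hiT.1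
  have hiLidx := (hord.2.1 iL).mp hiLQ
  have hmax0 : 0 < I.hmax := lt_of_lt_of_le (I.h_pos iL) (BLProofAux.h_le_hmax I iL)
  have hhB : 0 < (I.r iB).h := I.h_pos iB
  have hfeas : I.FeasibleAt pos iL (0, I.hmax + (I.r iB).h) := by
    refine ⟨⟨le_refl 0, by simpa using I.w_le_W iL, by show (0:ℝ) ≤ I.hmax + (I.r iB).h; linarith⟩, ?_⟩
    intro j hj
    have hjlt : (j : ℕ) < (iL : ℕ) := Fin.lt_def.mp hj
    rw [BLProofAux.disjoint_openBox_iff (I.w_pos iL) (I.h_pos iL) (I.w_pos j) (I.h_pos j)]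
    by_cases hjF : (j : ℕ) < d.F.card
    · have hsj := BLProofAux.stair hord hBL j hjF
      right; right; right
      show (pos j).2 + (I.r j).h ≤ ((0:ℝ), I.hmax + (I.r iB).h).2
      rw [hsj]
      have := BLProofAux.h_le_hmax I j
      show (0:ℝ) + (I.r j).h ≤ I.hmax + (I.r iB).h
      linarith
    · have hjQ : j ∈ d.Q := (hord.2.1 j).mpr ⟨not_lt.mp hjF, by omega⟩
      by_cases hxj : (I.r iL).w ≤ (pos j).1
      · left
        show ((0:ℝ), I.hmax + (I.r iB).h).1 + (I.r iL).w ≤ (pos j).1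
        show (0:ℝ) + (I.r iL).w ≤ (pos j).1
        linarith
      · push_neg at hxj
        have hxj0 : 0 < (pos j).1 := by
          have h0 : 0 ≤ (pos j).1 := (hBL j).1.1.1
          rcases eq_or_lt_of_le h0 with heq | hlt
          · exfalso
            rcases hiL with ⟨_, _, hmin⟩ | ⟨hnone, _⟩
            · have := hmin j hjQ heq.symm
              have := Fin.le_def.mp this
              omega
            · exact hnone j hjQ heq.symm
          · exact hlt
        obtain ⟨l, hl_lt, hl_eq, hl_y1, hl_y2⟩ := BLProofAux.exists_left_supporter hBL j hxj0
        have hlidx : (l : ℕ) < (j : ℕ) := Fin.lt_def.mp hl_lt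
        have hlF : (l : ℕ) < d.F.card := by
          by_contra hlF
          push_neg at hlF
          have hlQ : l ∈ d.Q := (hord.2.1 l).mpr ⟨hlF, by omega⟩
          have hwl : (I.r iL).w ≤ (I.r l).w := hord.2.2.2 l iL hlF (by omega) hiLidx.2
          have hl0 : 0 ≤ (pos l).1 := (hBL l).1.1.1
          linarith
        have hsl := BLProofAux.stair hord hBL l hlF
        have hyj : (pos j).2 < I.hmax := by
          rw [hsl] at hl_y2
          have h2 : (pos j).2 < 0 + (I.r l).h := hl_y2
          have := BLProofAux.h_le_hmax I l
          linarith
        have hhj : (I.r j).h ≤ (I.r iB).h :=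
          BLProofAux.Q_h_le_hB hord hBL hQ ia hia iB hiB j hjQ
        right; right; right
        show (pos j).2 + (I.r j).h ≤ I.hmax + (I.r iB).h
        linarith
  rcases (hBL iL).2 _ hfeas with h | h
  · exact le_of_lt h
  · exact le_of_eq h.1
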